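/- If G is a one-point union of cycles (a graph of order p obtained from a collection of cycles by identifying one vertex from each cycle into a single common vertex), then str(G) = p + 2. -/

import Mathlib

open Finset

/-- A numbering of a graph of order `Fintype.card V` is a bijection onto `{1, …, card V}`. -/
def IsNumbering {V : Type*} [Fintype V] (f : V → ℕ) : Prop :=
  Set.BijOn f Set.univ (Set.Icc 1 (Fintype.card V))

/-- The strength `str_f` of a numbering `f` of `G`: the maximum of `f u + f v` over edges. -/
noncomputable def strOf {V : Type*} [Fintype V] (G : SimpleGraph V) (f : V → ℕ) : ℕ :=
  sSup {n | ∃ u v, G.Adj u v ∧ n = f u + f v}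

/-- The strength of a graph: the minimum over all numberings `f` of `str_f`. -/
noncomputable def strength {V : Type*} [Fintype V] (G : SimpleGraph V) : ℕ :=
  sInf {n | ∃ f : V → ℕ, IsNumbering f ∧ strOf G f = n}

/-- The one-point union of the cycles `C_{n 0}, …, C_{n (t-1)}`: the hub is `none`, and the
`i`-th cycle consists of the hub together with the path `(i, 0), (i, 1), …, (i, n i - 2)`,
whose two ends are joined to the hub. -/
def onePointUnionCycles (t : ℕ) (n : Fin t → ℕ) :
    SimpleGraph (Option (Σ i : Fin t, Fin (n i - 1))) where
  Adj x y :=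
    match x, y with
    | none, none => False
    | none, some ⟨i, a⟩ => (a : ℕ) = 0 ∨ (a : ℕ) = n i - 2
    | some ⟨i, a⟩, none => (a : ℕ) = 0 ∨ (a : ℕ) = n i - 2
    | some ⟨i, a⟩, some ⟨j, b⟩ => i = j ∧ ((a : ℕ) + 1 = (b : ℕ) ∨ (b : ℕ) + 1 = (a : ℕ))
  symm := by
    constructor
    rintro (_ | ⟨i, a⟩) (_ | ⟨j, b⟩) h
    · exact h
    · exact h
    · exact h
    · obtain ⟨rfl, h2⟩ := h
      exact ⟨rfl, h2.symm⟩
  loopless := by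
    constructor
    rintro (_ | ⟨i, a⟩) h
    · exact h
    · rcases h.2 with h2 | h2 <;> omega

/-! ### Auxiliary machinery -/

/-- The label of the path vertex at (global) position `j`, in a graph of order `p`. -/
def gLabel (p j : ℕ) : ℕ := if j % 2 = 0 then p - j / 2 else j / 2 + 2

lemma gLabel_ge (p j : ℕ) (hp : 2 ≤ p) (hj : j + 2 ≤ p) : 2 ≤ gLabel p j := by
  unfold gLabel; split <;> omega

lemma gLabel_le (p j : ℕ) (hp : 2 ≤ p) (hj : j + 2 ≤ p) : gLabel p j ≤ p := by
  unfold gLabel; split <;> omega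

lemma gLabel_inj (p : ℕ) {j k : ℕ} (hj : j + 2 ≤ p) (hk : k + 2 ≤ p) (h : j ≠ k) :
    gLabel p j ≠ gLabel p k := by
  unfold gLabel; split <;> split <;> omega

lemma gLabel_add_succ (p j : ℕ) (h : j + 3 ≤ p) :
    gLabel p j + gLabel p (j + 1) ≤ p + 2 := by
  unfold gLabel; split <;> split <;> omega

/-- Offset of the `i`-th path inside the global linear arrangement. -/
def cycOffset (t : ℕ) (n : Fin t → ℕ) (i : Fin t) : ℕ := ∑ j ∈ Finset.Iio i, (n j - 1)

/-- Global position of a path vertex. -/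
def cycPos (t : ℕ) (n : Fin t → ℕ) (v : Σ i : Fin t, Fin (n i - 1)) : ℕ :=
  cycOffset t n v.1 + v.2

lemma cycOffset_add_le (t : ℕ) (n : Fin t → ℕ) {i j : Fin t} (h : i < j) :
    cycOffset t n i + (n i - 1) ≤ cycOffset t n j := by
  have h2 : insert i (Finset.Iio i) ⊆ Finset.Iio j := by
    intro x hx
    simp only [Finset.mem_insert, Finset.mem_Iio] at hx ⊢
    rcases hx with rfl | hx
    · exact h
    · exact hx.trans h
  have e1 : ∑ k ∈ insert i (Finset.Iio i), (n k - 1) = cycOffset t n i + (n i - 1) := by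
    rw [Finset.sum_insert (by simp)]
    unfold cycOffset
    exact add_comm _ _
  rw [← e1]
  exact Finset.sum_le_sum_of_subset h2

lemma cycPos_lt (t : ℕ) (n : Fin t → ℕ) (v : Σ i : Fin t, Fin (n i - 1)) :
    cycPos t n v < ∑ j, (n j - 1) := by
  obtain ⟨i, a⟩ := v
  have ha : (a : ℕ) < n i - 1 := a.isLt
  have e1 : ∑ k ∈ insert i (Finset.Iio i), (n k - 1) = cycOffset t n i + (n i - 1) := by
    rw [Finset.sum_insert (by simp)]
    unfold cycOffset
    exact add_comm _ _
  have h1 : cycOffset t n i + (n i - 1) ≤ ∑ j, (n j - 1) := by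
    rw [← e1]
    exact Finset.sum_le_sum_of_subset (Finset.subset_univ _)
  have h2 : cycPos t n ⟨i, a⟩ = cycOffset t n i + a := rfl
  omega

lemma cycPos_inj (t : ℕ) (n : Fin t → ℕ) : Function.Injective (cycPos t n) := by
  rintro ⟨i, a⟩ ⟨j, b⟩ h
  have ha : (a : ℕ) < n i - 1 := a.isLt
  have hb : (b : ℕ) < n j - 1 := b.isLt
  have hIJ : cycPos t n ⟨i, a⟩ = cycOffset t n i + a := rfl
  have hJI : cycPos t n ⟨j, b⟩ = cycOffset t n j + b := rfl
  rcases lt_trichotomy i j with hij | rfl | hij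
  · exfalso
    have h1 := cycOffset_add_le t n hij
    omega
  · have hab : (a : ℕ) = b := by omega
    exact Sigma.ext rfl (heq_of_eq (Fin.ext hab))
  · exfalso
    have h1 := cycOffset_add_le t n hij
    omega

/-- The numbering: hub gets `1`, path vertex at position `j` gets `gLabel p j`. -/
def cycLabel (t : ℕ) (n : Fin t → ℕ) : Option (Σ i : Fin t, Fin (n i - 1)) → ℕ
  | none => 1
  | some v => gLabel ((∑ j, (n j - 1)) + 1) (cycPos t n v)

/-- The one-point union of cycles of total order `p` has strength `p + 2`. -/
theorem strength_onePointUnionCycles (t : ℕ) (ht : 1 ≤ t) (n : Fin t → ℕ)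
    (hn : ∀ i, 3 ≤ n i) :
    strength (onePointUnionCycles t n) =
      Fintype.card (Option (Σ i : Fin t, Fin (n i - 1))) + 2 := by
  classical
  set m := ∑ j : Fin t, (n j - 1) with hm
  have hcard : Fintype.card (Option (Σ i : Fin t, Fin (n i - 1))) = m + 1 := by
    simp [Fintype.card_option, Fintype.card_sigma, hm]
  set p := m + 1 with hp
  have hm2 : 2 ≤ m := by
    have h0 : (2 : ℕ) ≤ n ⟨0, ht⟩ - 1 := by have := hn ⟨0, ht⟩; omega
    have h1 : n ⟨0, ht⟩ - 1 ≤ m := by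
      rw [hm]
      exact Finset.single_le_sum (f := fun j => n j - 1) (fun _ _ => Nat.zero_le _)
        (Finset.mem_univ _)
    omega
  have hposlt : ∀ v, cycPos t n v < m := fun v => cycPos_lt t n v
  have hpos2 : ∀ v : (Σ i : Fin t, Fin (n i - 1)), cycPos t n v + 2 ≤ p := fun v => by
    have := hposlt v; omega
  set f := cycLabel t n with hf
  have hfnone : f none = 1 := rfl
  have hfsome : ∀ v, f (some v) = gLabel p (cycPos t n v) := fun v => rfl
  -- injectivity of the numbering
  have hfinj : Function.Injective f := by
    rintro (_ | v) (_ | w) h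
    · rfl
    · exfalso
      rw [hfnone, hfsome] at h
      have := gLabel_ge p _ (by omega) (hpos2 w); omega
    · exfalso
      rw [hfnone, hfsome] at h
      have := gLabel_ge p _ (by omega) (hpos2 v); omega
    · rw [hfsome, hfsome] at h
      by_contra hne
      have hvw : v ≠ w := fun e => hne (by rw [e])
      have hpne : cycPos t n v ≠ cycPos t n w := fun e => hvw (cycPos_inj t n e)
      exact gLabel_inj p (hpos2 v) (hpos2 w) hpne h
  have hfmem : ∀ x, 1 ≤ f x ∧ f x ≤ p := by
    rintro (_ | v)
    · rw [hfnone]; omega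
    · rw [hfsome]
      have h1 := gLabel_ge p _ (by omega) (hpos2 v)
      have h2 := gLabel_le p _ (by omega) (hpos2 v)
      omega
  -- `f` is a numbering
  have hnum : IsNumbering f := by
    unfold IsNumbering
    rw [hcard]
    refine ⟨fun x _ => ?_, hfinj.injOn, ?_⟩
    · rw [Set.mem_Icc]; exact hfmem x
    · -- surjectivity onto Icc via counting
      have himg : Finset.image f Finset.univ = Finset.Icc 1 p := by
        apply Finset.eq_of_subset_of_card_le
        · intro y hy
          simp only [Finset.mem_image] at hy
          obtain ⟨x, _, rfl⟩ := hy
          rw [Finset.mem_Icc]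
          exact hfmem x
        · rw [Nat.card_Icc, Finset.card_image_of_injective _ hfinj, Finset.card_univ, hcard]
          omega
      intro y hy
      have hy' : y ∈ Finset.Icc 1 p := by rw [Finset.mem_Icc]; exact ⟨hy.1, hy.2⟩
      rw [← himg] at hy'
      simp only [Finset.mem_image] at hy'
      obtain ⟨x, _, rfl⟩ := hy'
      exact ⟨x, Set.mem_univ x, rfl⟩
  -- upper bound for the strength of `f`
  have hub : strOf (onePointUnionCycles t n) f ≤ p + 2 := by
    refine csSup_le' ?_
    rintro x ⟨u, v, hadj, rfl⟩
    rcases u with _ | ⟨i, a⟩ <;> rcases v with _ | ⟨j, b⟩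
    · exact absurd hadj (by exact fun h => h)
    · rw [hfnone, hfsome]
      have h2 := gLabel_le p _ (by omega) (hpos2 ⟨j, b⟩)
      omega
    · rw [hfnone, hfsome]
      have h2 := gLabel_le p _ (by omega) (hpos2 ⟨i, a⟩)
      omega
    · obtain ⟨rfl, hab⟩ := hadj
      have hpa := hposlt ⟨i, a⟩
      have hpb := hposlt ⟨i, b⟩
      have hIA : cycPos t n ⟨i, a⟩ = cycOffset t n i + a := rfl
      have hIB : cycPos t n ⟨i, b⟩ = cycOffset t n i + b := rfl
      rw [hfsome, hfsome]
      rcases hab with hab | hab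
      · have hsucc : cycPos t n ⟨i, b⟩ = cycPos t n ⟨i, a⟩ + 1 := by omega
        rw [hsucc]
        exact gLabel_add_succ p _ (by omega)
      · have hsucc : cycPos t n ⟨i, a⟩ = cycPos t n ⟨i, b⟩ + 1 := by omega
        rw [hsucc, add_comm]
        exact gLabel_add_succ p _ (by omega)
  -- every vertex has two distinct neighbours
  have hnbrs : ∀ u : Option (Σ i : Fin t, Fin (n i - 1)),
      ∃ v w, (onePointUnionCycles t n).Adj u v ∧ (onePointUnionCycles t n).Adj u w ∧ v ≠ w := by
    rintro (_ | ⟨i, a⟩)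
    · have h3 := hn ⟨0, ht⟩
      refine ⟨some ⟨⟨0, ht⟩, ⟨0, by omega⟩⟩, some ⟨⟨0, ht⟩, ⟨n ⟨0, ht⟩ - 2, by omega⟩⟩,
        Or.inl rfl, Or.inr rfl, ?_⟩
      intro hcontra
      rw [Option.some_inj] at hcontra
      have := congrArg (fun s : Σ i : Fin t, Fin (n i - 1) => (s.2 : ℕ)) hcontra
      simp only at this
      omega
    · have hni := hn i
      have ha := a.isLt
      by_cases h0 : (a : ℕ) = 0
      · refine ⟨none, some ⟨i, ⟨1, by omega⟩⟩, Or.inl h0,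
          ⟨rfl, Or.inl (by show (a : ℕ) + 1 = 1; omega)⟩, by simp⟩
      · by_cases hlast : (a : ℕ) = n i - 2
        · refine ⟨some ⟨i, ⟨(a : ℕ) - 1, by omega⟩⟩, none,
            ⟨rfl, Or.inr (by show (a : ℕ) - 1 + 1 = (a : ℕ); omega)⟩, Or.inr hlast, by simp⟩
        · refine ⟨some ⟨i, ⟨(a : ℕ) - 1, by omega⟩⟩, some ⟨i, ⟨(a : ℕ) + 1, by omega⟩⟩,
            ⟨rfl, Or.inr (by show (a : ℕ) - 1 + 1 = (a : ℕ); omega)⟩,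
            ⟨rfl, Or.inl (by show (a : ℕ) + 1 = (a : ℕ) + 1; rfl)⟩, ?_⟩
          intro hcontra
          rw [Option.some_inj] at hcontra
          have := congrArg (fun s : Σ i : Fin t, Fin (n i - 1) => (s.2 : ℕ)) hcontra
          simp only at this
          omega
  -- lower bound for the strength of any numbering
  have hlb : ∀ g : Option (Σ i : Fin t, Fin (n i - 1)) → ℕ,
      IsNumbering g → p + 2 ≤ strOf (onePointUnionCycles t n) g := by
    intro g hg
    have hgmem : ∀ x, 1 ≤ g x ∧ g x ≤ p := fun x => by
      have hx := hg.1 (Set.mem_univ x)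
      rw [hcard] at hx
      exact ⟨hx.1, hx.2⟩
    have hpmem : (p : ℕ) ∈ Set.Icc 1 (Fintype.card (Option (Σ i : Fin t, Fin (n i - 1)))) := by
      rw [Set.mem_Icc, hcard]; omega
    obtain ⟨u, -, hu⟩ := hg.2.2 hpmem
    obtain ⟨v, w, huv, huw, hvw⟩ := hnbrs u
    have hgvw : g v ≠ g w := fun e => hvw (hg.2.1 (Set.mem_univ v) (Set.mem_univ w) e)
    have hbdd : BddAbove {k | ∃ a b, (onePointUnionCycles t n).Adj a b ∧ k = g a + g b} := by
      refine ⟨2 * p, ?_⟩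
      rintro x ⟨a, b, -, rfl⟩
      have h1 := hgmem a
      have h2 := hgmem b
      omega
    have hstr : strOf (onePointUnionCycles t n) g =
        sSup {k | ∃ a b, (onePointUnionCycles t n).Adj a b ∧ k = g a + g b} := rfl
    have hv := hgmem v
    have hw := hgmem w
    have h2 : 2 ≤ g v ∨ 2 ≤ g w := by omega
    rcases h2 with h2 | h2
    · have hmem : g u + g v ∈ {k | ∃ a b, (onePointUnionCycles t n).Adj a b ∧ k = g a + g b} :=
        ⟨u, v, huv, rfl⟩
      have hle := le_csSup hbdd hmem
      omega
    · have hmem : g u + g w ∈ {k | ∃ a b, (onePointUnionCycles t n).Adj a b ∧ k = g a + g b} :=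
        ⟨u, w, huw, rfl⟩
      have hle := le_csSup hbdd hmem
      omega
  -- conclusion
  have hTmem : (p + 2) ∈ {k | ∃ g : Option (Σ i : Fin t, Fin (n i - 1)) → ℕ,
      IsNumbering g ∧ strOf (onePointUnionCycles t n) g = k} :=
    ⟨f, hnum, le_antisymm hub (hlb f hnum)⟩
  have h1 : strength (onePointUnionCycles t n) ≤ p + 2 := Nat.sInf_le hTmem
  have h2 : p + 2 ≤ strength (onePointUnionCycles t n) := by
    refine le_csInf ⟨_, hTmem⟩ ?_
    rintro x ⟨g, hg, rfl⟩
    exact hlb g hg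
  rw [hcard]
  omega
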